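/- Let p and q be probability measures on a measurable space α with p absolutely continuous with respect to q, let ω : α → ℝ be the real-valued Radon–Nikodym derivative of p with respect to q, and let r : α → ℝ be measurable with |r(x)| ≤ R for q-almost every x, where R ≥ 0. Assume ω and ω·r are square-integrable with respect to q. Let J = ∫ r dp, let N ≥ 1, let q^N be the product measure on Fin N → α of N copies of q, and define Ŵ(x) = (1/N) · ∑_{i∈Fin N} ω(x i) · r(x i). Then for every δ with 0 < δ ≤ 1, q^N { x : J ≥ Ŵ(x) − R · sqrt( (1 − δ) · (∫ ω² dq) / (δ · N) ) } ≥ 1 − δ. (The lower bound on the off-policy objective expressed with the exponentiated Rényi-2 divergence penalty, obtained by combining Theorem 2 with Lemma 3.) -/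

import Mathlib

open MeasureTheory

namespace LBOaux

lemma prod_eq_two {M : Type*} [CommMonoid M] {N : ℕ} {i j : Fin N} (hij : i ≠ j)
    (F : Fin N → M) (hF : ∀ k, k ≠ i → k ≠ j → F k = 1) :
    ∏ k, F k = F i * F j := by
  classical
  have h1 : ∏ k ∈ (Finset.univ.erase i).erase j, F k = 1 :=
    Finset.prod_eq_one (fun k hk => by
      rw [Finset.mem_erase, Finset.mem_erase] at hk
      exact hF k hk.2.1 hk.1)
  rw [← Finset.mul_prod_erase Finset.univ F (Finset.mem_univ i),
    ← Finset.mul_prod_erase _ F (Finset.mem_erase.mpr ⟨hij.symm, Finset.mem_univ j⟩),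
    h1, mul_one]

variable {α : Type*} [MeasurableSpace α] (q : Measure α) [IsProbabilityMeasure q]

lemma pi_eq_volume {N : ℕ} :
    letI : MeasureSpace α := ⟨q⟩
    (Measure.pi fun _ : Fin N => q) = (volume : Measure (Fin N → α)) := rfl

lemma integral_eval {N : ℕ} (i : Fin N) (h : α → ℝ) :
    ∫ x : Fin N → α, h (x i) ∂(Measure.pi fun _ : Fin N => q) = ∫ y, h y ∂q := by
  letI : MeasureSpace α := ⟨q⟩
  haveI : IsProbabilityMeasure (volume : Measure α) := ‹_›
  calc ∫ x : Fin N → α, h (x i) ∂(Measure.pi fun _ : Fin N => q)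
      = ∫ x : Fin N → α, ∏ k, (if k = i then h else fun _ => (1:ℝ)) (x k) := by
        congr 1; funext x
        simp [ite_apply, Finset.prod_ite_eq']
    _ = ∏ k, ∫ y, (if k = i then h else fun _ => (1:ℝ)) y :=
        MeasureTheory.integral_fintype_prod_eq_prod _
    _ = ∫ y, h y ∂q := by
        rw [Finset.prod_congr rfl
          (fun k _ => show (∫ y, (if k = i then h else fun _ => (1:ℝ)) y)
              = if k = i then ∫ y, h y ∂q else 1 by
            by_cases hk : k = i
            · simp only [hk, if_pos]
              rfl
            · simp [hk])]
        simp [Finset.prod_ite_eq']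

lemma integrable_eval {N : ℕ} (i : Fin N) {h : α → ℝ} (hh : Integrable h q) :
    Integrable (fun x : Fin N → α => h (x i)) (Measure.pi fun _ : Fin N => q) := by
  letI : MeasureSpace α := ⟨q⟩
  haveI : IsProbabilityMeasure (volume : Measure α) := ‹_›
  have H : Integrable (fun x : Fin N → α => ∏ k, (if k = i then h else fun _ => (1:ℝ)) (x k)) :=
    Integrable.fintype_prod (fun k => by
      by_cases hk : k = i
      · rw [hk, if_pos rfl]; exact hh
      · simp [hk, integrable_const])
  have he : (fun x : Fin N → α => ∏ k, (if k = i then h else fun _ => (1:ℝ)) (x k))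
      = fun x : Fin N → α => h (x i) := by
    funext x; simp [ite_apply, Finset.prod_ite_eq']
  rw [← he]; exact H

lemma integral_eval_mul {N : ℕ} {i j : Fin N} (hij : i ≠ j) (g h : α → ℝ) :
    ∫ x : Fin N → α, g (x i) * h (x j) ∂(Measure.pi fun _ : Fin N => q)
      = (∫ y, g y ∂q) * ∫ y, h y ∂q := by
  classical
  letI : MeasureSpace α := ⟨q⟩
  haveI : IsProbabilityMeasure (volume : Measure α) := ‹_›
  set F : Fin N → α → ℝ := fun k => if k = i then g else if k = j then h else fun _ => (1:ℝ)
    with hF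
  have hFi : F i = g := by simp [hF]
  have hFj : F j = h := by simp [hF, hij.symm]
  have hFo : ∀ k, k ≠ i → k ≠ j → F k = fun _ => (1:ℝ) := by
    intro k h1 h2; simp [hF, h1, h2]
  calc ∫ x : Fin N → α, g (x i) * h (x j) ∂(Measure.pi fun _ : Fin N => q)
      = ∫ x : Fin N → α, ∏ k, F k (x k) := by
        congr 1; funext x
        rw [prod_eq_two hij (fun k => F k (x k))
          (fun k h1 h2 => by simp [hFo k h1 h2])]
        simp only [hFi, hFj]
    _ = ∏ k, ∫ y, F k y :=
        MeasureTheory.integral_fintype_prod_eq_prod _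
    _ = (∫ y, g y ∂q) * ∫ y, h y ∂q := by
        rw [prod_eq_two hij (fun k => ∫ y, F k y)
          (fun k h1 h2 => by rw [hFo k h1 h2]; simp)]
        simp only [hFi, hFj]
        rfl

lemma integrable_eval_mul {N : ℕ} {i j : Fin N} (hij : i ≠ j) {g h : α → ℝ}
    (hg : Integrable g q) (hh : Integrable h q) :
    Integrable (fun x : Fin N → α => g (x i) * h (x j))
      (Measure.pi fun _ : Fin N => q) := by
  classical
  letI : MeasureSpace α := ⟨q⟩
  haveI : IsProbabilityMeasure (volume : Measure α) := ‹_›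
  set F : Fin N → α → ℝ := fun k => if k = i then g else if k = j then h else fun _ => (1:ℝ)
    with hF
  have hFi : F i = g := by simp [hF]
  have hFj : F j = h := by simp [hF, hij.symm]
  have hFo : ∀ k, k ≠ i → k ≠ j → F k = fun _ => (1:ℝ) := by
    intro k h1 h2; simp [hF, h1, h2]
  have H : Integrable (fun x : Fin N → α => ∏ k, F k (x k)) :=
    Integrable.fintype_prod (fun k => by
      by_cases h1 : k = i
      · rw [h1, hFi]; exact hg
      · by_cases h2 : k = j
        · rw [h2, hFj]; exact hh
        · rw [hFo k h1 h2]; exact integrable_const 1)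
  have he : (fun x : Fin N → α => ∏ k, F k (x k))
      = fun x : Fin N → α => g (x i) * h (x j) := by
    funext x
    rw [prod_eq_two hij (fun k => F k (x k))
      (fun k h1 h2 => by simp [hFo k h1 h2])]
    simp only [hFi, hFj]
  rw [← he]; exact H

lemma cantelli_pi {N : ℕ} {g : α → ℝ}
    (hgint : Integrable g q) (hg2 : Integrable (fun y => g y ^ 2) q)
    (hgmean : ∫ y, g y ∂q = 0) {t : ℝ} (ht : 0 < t) :
    (Measure.pi fun _ : Fin N => q) {x : Fin N → α | t ≤ ∑ i, g (x i)}
      ≤ ENNReal.ofReal ((N * ∫ y, g y ^ 2 ∂q) / (N * ∫ y, g y ^ 2 ∂q + t ^ 2)) := by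
  classical
  set m := Measure.pi fun _ : Fin N => q with hm
  haveI : IsProbabilityMeasure m := by rw [hm]; infer_instance
  set v := ∫ y, g y ^ 2 ∂q with hv
  have hv0 : 0 ≤ v := integral_nonneg fun y => sq_nonneg _
  have hgg : Integrable (fun y => g y * g y) q := by simpa [sq] using hg2
  set u := (N * v) / t with hu
  have hu0 : 0 ≤ u := div_nonneg (by positivity) ht.le
  have hterm : ∀ i j : Fin N, Integrable (fun x : Fin N → α => g (x i) * g (x j)) m := by
    intro i j
    rcases eq_or_ne i j with rfl | hij
    · exact integrable_eval q i hgg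
    · exact integrable_eval_mul q hij hgint hgint
  have hterm_int : ∀ i j : Fin N,
      ∫ x, g (x i) * g (x j) ∂m = if i = j then v else 0 := by
    intro i j
    rcases eq_or_ne i j with rfl | hij
    · rw [if_pos rfl]
      rw [hm, integral_eval q i (fun y => g y * g y), hv]
      congr 1; funext y; ring
    · rw [if_neg hij, integral_eval_mul q hij, hgmean, mul_zero]
  have hexp : (fun x : Fin N → α => (∑ i, g (x i)) ^ 2)
      = fun x => ∑ i, ∑ j, g (x i) * g (x j) := by
    funext x; rw [sq, Finset.sum_mul_sum]
  have hS2int : Integrable (fun x : Fin N → α => (∑ i, g (x i)) ^ 2) m := by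
    rw [hexp]
    exact integrable_finset_sum _ fun i _ => integrable_finset_sum _ fun j _ => hterm i j
  have hS2 : ∫ x, (∑ i, g (x i)) ^ 2 ∂m = N * v := by
    rw [hexp, integral_finset_sum _ (fun i _ => integrable_finset_sum _ fun j _ => hterm i j)]
    rw [Finset.sum_congr rfl fun i _ => integral_finset_sum _ fun j _ => hterm i j]
    rw [Finset.sum_congr rfl fun i _ => Finset.sum_congr rfl fun j _ => hterm_int i j]
    simp [Finset.sum_ite_eq, mul_comm]
  have hSint : Integrable (fun x : Fin N → α => ∑ i, g (x i)) m :=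
    integrable_finset_sum _ fun i _ => integrable_eval q i hgint
  have hSmean : ∫ x, (∑ i, g (x i)) ∂m = 0 := by
    rw [integral_finset_sum _ fun i _ => integrable_eval q i hgint]
    simp [integral_eval q _ g, hgmean]
  have hQexp : (fun x : Fin N → α => ((∑ i, g (x i)) + u) ^ 2)
      = fun x => (∑ i, g (x i)) ^ 2 + ((2 * u) * (∑ i, g (x i)) + u ^ 2) := by
    funext x; ring
  have hg1 : Integrable (fun x : Fin N → α => (2 * u) * (∑ i, g (x i))) m :=
    hSint.const_mul _
  have hg2' : Integrable (fun x : Fin N → α => (2 * u) * (∑ i, g (x i)) + u ^ 2) m :=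
    hg1.add (integrable_const _)
  have hQint : Integrable (fun x : Fin N → α => ((∑ i, g (x i)) + u) ^ 2) m := by
    rw [hQexp]; exact hS2int.add hg2'
  have hQval : ∫ x, ((∑ i, g (x i)) + u) ^ 2 ∂m = N * v + u ^ 2 := by
    rw [hQexp, integral_add hS2int hg2', integral_add hg1 (integrable_const _),
      integral_const_mul, hSmean, hS2]
    simp
  set A := {x : Fin N → α | (t + u) ^ 2 ≤ ((∑ i, g (x i)) + u) ^ 2} with hA
  have htu : 0 < t + u := by linarith
  have hsub : {x : Fin N → α | t ≤ ∑ i, g (x i)} ⊆ A := by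
    intro x hx
    have hx' : t ≤ ∑ i, g (x i) := hx
    have h1 : t + u ≤ (∑ i, g (x i)) + u := by linarith
    exact pow_le_pow_left₀ htu.le h1 2
  have hmar : (t + u) ^ 2 * (m A).toReal ≤ N * v + u ^ 2 := by
    have := mul_meas_ge_le_integral_of_nonneg
      (μ := m) (f := fun x : Fin N → α => ((∑ i, g (x i)) + u) ^ 2)
      (Filter.Eventually.of_forall fun x => sq_nonneg _) hQint ((t + u) ^ 2)
    rw [hQval] at this
    exact this
  have hmE : (m A).toReal ≤ (N * v + u ^ 2) / (t + u) ^ 2 := by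
    rw [le_div_iff₀ (by positivity)]
    linarith [hmar]
  have hident : (N * v + u ^ 2) / (t + u) ^ 2 = (N * v) / (N * v + t ^ 2) := by
    have ht' : t ≠ 0 := ht.ne'
    have h2 : (0:ℝ) < N * v + t ^ 2 := by positivity
    rw [hu]
    field_simp
    ring
  refine le_trans (measure_mono hsub) ?_
  rw [← ENNReal.ofReal_toReal (measure_ne_top m A)]
  apply ENNReal.ofReal_le_ofReal
  rw [← hident]
  exact hmE


end LBOaux

namespace LBOaux

variable {α : Type*} [MeasurableSpace α] (q : Measure α) [IsProbabilityMeasure q]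

lemma cantelli_pi' {f : α → ℝ} (hfm : Measurable f)
    (hf2 : Integrable (fun y => f y ^ 2) q)
    {N : ℕ} {t : ℝ} (ht : 0 < t) {B : ℝ} (hB : ∫ y, f y ^ 2 ∂q ≤ B) :
    (Measure.pi fun _ : Fin N => q)
      {x : Fin N → α | t ≤ (∑ i, f (x i)) - N * ∫ y, f y ∂q}
      ≤ ENNReal.ofReal ((N * B) / (N * B + t ^ 2)) := by
  classical
  have hfL2 : MemLp f 2 q := (memLp_two_iff_integrable_sq hfm.aestronglyMeasurable).mpr hf2
  have hfint : Integrable f q := hfL2.integrable one_le_two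
  have hgL2 : MemLp (fun y => f y - ∫ z, f z ∂q) 2 q := hfL2.sub (memLp_const _)
  have hgint : Integrable (fun y => f y - ∫ z, f z ∂q) q := hfint.sub (integrable_const _)
  have hg2 : Integrable (fun y => (f y - ∫ z, f z ∂q) ^ 2) q :=
    (memLp_two_iff_integrable_sq hgL2.aestronglyMeasurable).mp hgL2
  have hgmean : ∫ y, (f y - ∫ z, f z ∂q) ∂q = 0 := by
    rw [integral_sub hfint (integrable_const _), integral_const]
    simp
  -- variance bound
  have h1 : Integrable (fun y => (2 * ∫ z, f z ∂q) * f y - (∫ z, f z ∂q) ^ 2) q :=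
    (hfint.const_mul _).sub (integrable_const _)
  have hveq : ∫ y, (f y - ∫ z, f z ∂q) ^ 2 ∂q
      = (∫ y, f y ^ 2 ∂q) - (∫ z, f z ∂q) ^ 2 := by
    have he : (fun y => (f y - ∫ z, f z ∂q) ^ 2)
        = fun y => f y ^ 2 - ((2 * ∫ z, f z ∂q) * f y - (∫ z, f z ∂q) ^ 2) :=
      funext fun y => by ring
    rw [he, integral_sub hf2 h1, integral_sub (hfint.const_mul _) (integrable_const _),
      integral_const_mul, integral_const]
    simp; ring
  have hvB : ∫ y, (f y - ∫ z, f z ∂q) ^ 2 ∂q ≤ B := by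
    rw [hveq]; nlinarith [sq_nonneg (∫ z, f z ∂q)]
  have hv0 : 0 ≤ ∫ y, (f y - ∫ z, f z ∂q) ^ 2 ∂q := integral_nonneg fun y => sq_nonneg _
  have hseteq : {x : Fin N → α | t ≤ (∑ i, f (x i)) - N * ∫ y, f y ∂q}
      = {x : Fin N → α | t ≤ ∑ i, (f (x i) - ∫ z, f z ∂q)} := by
    ext x
    have hsum : ∑ i : Fin N, (f (x i) - ∫ z, f z ∂q)
        = (∑ i, f (x i)) - N * ∫ z, f z ∂q := by
      rw [Finset.sum_sub_distrib, Finset.sum_const, Finset.card_univ, Fintype.card_fin,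
        nsmul_eq_mul]
    simp only [Set.mem_setOf_eq, hsum]
  rw [hseteq]
  refine le_trans (cantelli_pi q hgint hg2 hgmean ht) <| ENNReal.ofReal_le_ofReal ?_
  have hNB : (0:ℝ) ≤ N * B := by
    have : (0:ℝ) ≤ B := le_trans (integral_nonneg fun y => sq_nonneg _) hB
    positivity
  rw [div_le_div_iff₀ (by positivity) (by positivity)]
  nlinarith [mul_nonneg (mul_nonneg (Nat.cast_nonneg N : (0:ℝ) ≤ N) hv0) (sq_nonneg t),
    mul_le_mul_of_nonneg_left hvB (Nat.cast_nonneg N : (0:ℝ) ≤ N)]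

lemma compl_bound {Ω : Type*} [MeasurableSpace Ω] (m : Measure Ω) [IsProbabilityMeasure m]
    {G : Set Ω} (hGm : MeasurableSet G) {δ : ℝ} (hδ0 : 0 ≤ δ) (hδ1 : δ ≤ 1)
    (h : m Gᶜ ≤ ENNReal.ofReal δ) : ENNReal.ofReal (1 - δ) ≤ m G := by
  have h1 : m G + m Gᶜ = 1 := by rw [measure_add_measure_compl hGm, measure_univ]
  have h2 : ENNReal.ofReal (1 - δ) + ENNReal.ofReal δ = 1 := by
    rw [← ENNReal.ofReal_add (by linarith) hδ0]
    norm_num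
  have h3 : ENNReal.ofReal (1 - δ) + m Gᶜ ≤ m G + m Gᶜ := by
    calc ENNReal.ofReal (1 - δ) + m Gᶜ ≤ ENNReal.ofReal (1 - δ) + ENNReal.ofReal δ :=
          add_le_add_right h _
      _ = 1 := h2
      _ = m G + m Gᶜ := h1.symm
  exact ENNReal.le_of_add_le_add_right (measure_ne_top m Gᶜ) h3

end LBOaux

open LBOaux

/-- Lower bound on the off-policy objective with the exponentiated Rényi-2
divergence penalty: with probability at least `1 − δ`,
`J ≥ Ŵ − R·sqrt((1−δ)·(∫ ω² dq)/(δ·N))`. -/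
theorem lower_bound_objective_renyi
    {α : Type*} [MeasurableSpace α]
    (p q : Measure α) [IsProbabilityMeasure p] [IsProbabilityMeasure q]
    (hpq : p ≪ q)
    (r : α → ℝ) (hr : Measurable r)
    (R : ℝ) (hR : 0 ≤ R) (hbdd : ∀ᵐ x ∂q, |r x| ≤ R)
    (hw : Integrable (fun x => ((p.rnDeriv q x).toReal) ^ 2) q)
    (hwr : Integrable (fun x => ((p.rnDeriv q x).toReal * r x) ^ 2) q)
    (N : ℕ) (hN : 1 ≤ N)
    (δ : ℝ) (hδ0 : 0 < δ) (hδ1 : δ ≤ 1) :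
    (Measure.pi fun _ : Fin N => q)
      {x : Fin N → α |
        (∫ y, r y ∂p) ≥
          (1 / (N : ℝ)) * (∑ i : Fin N, (p.rnDeriv q (x i)).toReal * r (x i)) -
            R * Real.sqrt ((1 - δ) *
              (∫ y, ((p.rnDeriv q y).toReal) ^ 2 ∂q) / (δ * N))} ≥
      ENNReal.ofReal (1 - δ) := by
  classical
  rcases eq_or_lt_of_le hδ1 with rfl | hδlt
  · have h0 : (1:ℝ) - 1 = 0 := by norm_num
    rw [h0, ENNReal.ofReal_zero]
    exact zero_le
  rcases eq_or_lt_of_le hR with hR0 | hRpos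
  · -- degenerate case R = 0 : r vanishes a.e.
    have hr0 : ∀ᵐ y ∂q, r y = 0 := hbdd.mono fun y hy => by
      rw [← hR0] at hy; exact abs_nonpos_iff.mp hy
    have hJ0 : ∫ y, r y ∂p = 0 :=
      integral_eq_zero_of_ae (hr0.filter_mono hpq.ae_le)
    have hAm : MeasurableSet {y | r y = 0} := hr (measurableSet_singleton 0)
    have hAc : q {y | r y = 0}ᶜ = 0 := ae_iff.mp hr0
    have hA1 : q {y | r y = 0} = 1 := (prob_compl_eq_zero_iff hAm).mp hAc
    calc ENNReal.ofReal (1 - δ) ≤ 1 := ENNReal.ofReal_le_one.mpr (by linarith)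
      _ = (Measure.pi fun _ : Fin N => q)
            (Set.univ.pi fun _ : Fin N => {y | r y = 0}) := by
          rw [Measure.pi_pi]
          simp [hA1]
      _ ≤ _ := measure_mono (by
          intro x hx
          have hx' : ∀ i : Fin N, r (x i) = 0 := fun i => hx i (Set.mem_univ i)
          simp only [Set.mem_setOf_eq, ge_iff_le]
          have hsum : ∑ i : Fin N, (p.rnDeriv q (x i)).toReal * r (x i) = 0 :=
            Finset.sum_eq_zero fun i _ => by rw [hx' i, mul_zero]
          rw [hJ0, hsum, ← hR0]
          simp)
  · -- main case R > 0
    have hN' : (1:ℝ) ≤ N := by exact_mod_cast hN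
    have hNpos : (0:ℝ) < N := by linarith
    have hδd : 0 < 1 - δ := by linarith
    have hωm : Measurable fun y => (p.rnDeriv q y).toReal :=
      (Measure.measurable_rnDeriv p q).ennreal_toReal
    have hfm : Measurable fun y => (p.rnDeriv q y).toReal * r y := hωm.mul hr
    have hfL2 : MemLp (fun y => (p.rnDeriv q y).toReal * r y) 2 q :=
      (memLp_two_iff_integrable_sq hfm.aestronglyMeasurable).mpr hwr
    have hfint : Integrable (fun y => (p.rnDeriv q y).toReal * r y) q :=
      hfL2.integrable one_le_two
    have hJ : ∫ y, r y ∂p = ∫ y, (p.rnDeriv q y).toReal * r y ∂q := by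
      have h := integral_rnDeriv_smul (μ := p) (ν := q) hpq (f := r)
      simp only [smul_eq_mul] at h
      rw [← h]
    -- positivity of the second moment
    have hM0 : 0 ≤ ∫ y, ((p.rnDeriv q y).toReal) ^ 2 ∂q :=
      integral_nonneg fun y => sq_nonneg _
    have hω1 : ∫ y, (p.rnDeriv q y).toReal ∂q = 1 := by
      rw [Measure.integral_toReal_rnDeriv hpq, probReal_univ]
    have hM₂pos : 0 < ∫ y, ((p.rnDeriv q y).toReal) ^ 2 ∂q := by
      rcases hM0.lt_or_eq with h | h
      · exact h
      · exfalso
        have hzero : (fun y => ((p.rnDeriv q y).toReal) ^ 2) =ᵐ[q] 0 :=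
          (integral_eq_zero_iff_of_nonneg (fun y => sq_nonneg _) hw).1 h.symm
        have hω0 : (fun y => (p.rnDeriv q y).toReal) =ᵐ[q] 0 := hzero.mono fun y hy => by
          simpa [pow_eq_zero_iff] using hy
        have h2 : ∫ y, (p.rnDeriv q y).toReal ∂q = 0 := by
          rw [integral_congr_ae hω0]; simp
        rw [hω1] at h2
        exact one_ne_zero h2
    have hapos : 0 < (1 - δ) * (∫ y, ((p.rnDeriv q y).toReal) ^ 2 ∂q) / (δ * N) := by
      positivity
    have hεpos : 0 < R * Real.sqrt ((1 - δ) *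
        (∫ y, ((p.rnDeriv q y).toReal) ^ 2 ∂q) / (δ * N)) :=
      mul_pos hRpos (Real.sqrt_pos.2 hapos)
    have htpos : 0 < (N : ℝ) * (R * Real.sqrt ((1 - δ) *
        (∫ y, ((p.rnDeriv q y).toReal) ^ 2 ∂q) / (δ * N))) := mul_pos hNpos hεpos
    -- second moment bound for f
    have hBle : ∫ y, ((p.rnDeriv q y).toReal * r y) ^ 2 ∂q
        ≤ R ^ 2 * ∫ y, ((p.rnDeriv q y).toReal) ^ 2 ∂q := by
      rw [← integral_const_mul]
      refine integral_mono_ae hwr (hw.const_mul _) (hbdd.mono fun y hy => ?_)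
      have h1 : (r y) ^ 2 ≤ R ^ 2 := by
        have := sq_abs (r y)
        nlinarith [abs_nonneg (r y)]
      show ((p.rnDeriv q y).toReal * r y) ^ 2 ≤ R ^ 2 * ((p.rnDeriv q y).toReal) ^ 2
      calc ((p.rnDeriv q y).toReal * r y) ^ 2
          = ((p.rnDeriv q y).toReal) ^ 2 * (r y) ^ 2 := by ring
        _ ≤ ((p.rnDeriv q y).toReal) ^ 2 * R ^ 2 :=
            mul_le_mul_of_nonneg_left h1 (sq_nonneg _)
        _ = R ^ 2 * ((p.rnDeriv q y).toReal) ^ 2 := by ring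
    -- measurability of the target set
    have hsm : Measurable fun x : Fin N → α =>
        ∑ i : Fin N, (p.rnDeriv q (x i)).toReal * r (x i) :=
      Finset.measurable_sum _ fun i _ => hfm.comp (measurable_pi_apply i)
    have hGm : MeasurableSet {x : Fin N → α |
        (∫ y, r y ∂p) ≥
          (1 / (N : ℝ)) * (∑ i : Fin N, (p.rnDeriv q (x i)).toReal * r (x i)) -
            R * Real.sqrt ((1 - δ) *
              (∫ y, ((p.rnDeriv q y).toReal) ^ 2 ∂q) / (δ * N))} :=
      measurableSet_le ((measurable_const.mul hsm).sub measurable_const) measurable_const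
    refine compl_bound _ hGm hδ0.le hδ1 ?_
    -- bound the complement via Cantelli
    have hsub : {x : Fin N → α |
        (∫ y, r y ∂p) ≥
          (1 / (N : ℝ)) * (∑ i : Fin N, (p.rnDeriv q (x i)).toReal * r (x i)) -
            R * Real.sqrt ((1 - δ) *
              (∫ y, ((p.rnDeriv q y).toReal) ^ 2 ∂q) / (δ * N))}ᶜ
        ⊆ {x : Fin N → α |
            (N : ℝ) * (R * Real.sqrt ((1 - δ) *
              (∫ y, ((p.rnDeriv q y).toReal) ^ 2 ∂q) / (δ * N)))
            ≤ (∑ i : Fin N, (p.rnDeriv q (x i)).toReal * r (x i))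
              - N * ∫ y, (p.rnDeriv q y).toReal * r y ∂q} := by
      intro x hx
      simp only [Set.mem_compl_iff, Set.mem_setOf_eq, ge_iff_le, not_le] at hx
      simp only [Set.mem_setOf_eq]
      rw [hJ] at hx
      have h2 := mul_lt_mul_of_pos_left hx hNpos
      have h3 : (N : ℝ) * ((1 / (N : ℝ)) *
          (∑ i : Fin N, (p.rnDeriv q (x i)).toReal * r (x i)) -
          R * Real.sqrt ((1 - δ) *
            (∫ y, ((p.rnDeriv q y).toReal) ^ 2 ∂q) / (δ * N)))
          = (∑ i : Fin N, (p.rnDeriv q (x i)).toReal * r (x i))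
            - (N : ℝ) * (R * Real.sqrt ((1 - δ) *
              (∫ y, ((p.rnDeriv q y).toReal) ^ 2 ∂q) / (δ * N))) := by
        rw [mul_sub, ← mul_assoc, mul_one_div_cancel hNpos.ne', one_mul]
      rw [h3] at h2
      linarith
    refine le_trans (measure_mono hsub) ?_
    refine le_trans (cantelli_pi' q hfm hwr htpos hBle) ?_
    apply ENNReal.ofReal_le_ofReal
    -- final arithmetic: the bound is exactly δ
    have hB2pos : (0:ℝ) < R ^ 2 * ∫ y, ((p.rnDeriv q y).toReal) ^ 2 ∂q := by positivity
    have hε2 : ((N : ℝ) * (R * Real.sqrt ((1 - δ) *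
        (∫ y, ((p.rnDeriv q y).toReal) ^ 2 ∂q) / (δ * N)))) ^ 2
        = (N : ℝ) ^ 2 * (R ^ 2 * ((1 - δ) *
          (∫ y, ((p.rnDeriv q y).toReal) ^ 2 ∂q) / (δ * N))) := by
      rw [mul_pow, mul_pow, Real.sq_sqrt hapos.le]
    rw [div_le_iff₀ (by positivity)]
    rw [hε2]
    have hkey : δ * ((N : ℝ) ^ 2 * (R ^ 2 * ((1 - δ) *
        (∫ y, ((p.rnDeriv q y).toReal) ^ 2 ∂q) / (δ * N))))
        = (N : ℝ) * (R ^ 2 * (∫ y, ((p.rnDeriv q y).toReal) ^ 2 ∂q)) * (1 - δ) := by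
      field_simp
    nlinarith [hkey]
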